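/- Under the hypotheses of the proposition linking λ to the limit set (sample clouds of X_E converge onto G with scaling log n, the angular dependence function λ exists, and the residual tail dependence coefficient η_D exists), one has 1/η_D = d·λ(1/d, …, 1/d) = [min{r ∈ [0,1] : (r,∞)^d ∩ G = ∅}]^{−1}. -/

import Mathlib

open MeasureTheory Filter Topology ProbabilityTheory Pointwise

/-- The `n`-point sample cloud `{X 1 / r n, …, X n / r n}` of the scaled observations. -/
def sampleCloud {Ω : Type*} {d : ℕ} (X : ℕ → Ω → (Fin d → ℝ)) (r : ℕ → ℝ)
    (n : ℕ) (ω : Ω) : Set (Fin d → ℝ) :=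
  {y | ∃ i, 1 ≤ i ∧ i ≤ n ∧ y = (r n)⁻¹ • X i ω}

/-- Convergence in probability of random sets onto a deterministic set `G`, in the sense that
the Hausdorff distance to `G` tends to `0` in probability. -/
def ConvInProbOnto {Ω : Type*} [MeasurableSpace Ω] {d : ℕ} (μ : Measure Ω)
    (N : ℕ → Ω → Set (Fin d → ℝ)) (G : Set (Fin d → ℝ)) : Prop :=
  ∀ ε : ℝ, 0 < ε →
    Tendsto (fun n => μ {ω | ε < Metric.hausdorffDist (N n ω) G}) atTop (𝓝 0)

/-- `ℓ` is slowly varying at infinity. -/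
def SlowlyVaryingAtTop (ℓ : ℝ → ℝ) : Prop :=
  ∀ x : ℝ, 0 < x → Tendsto (fun t => ℓ (t * x) / ℓ t) atTop (𝓝 1)

/-- `f` is regularly varying at infinity with index `ρ`. -/
def RegVaryingAtTop (f : ℝ → ℝ) (ρ : ℝ) : Prop :=
  ∀ x : ℝ, 0 < x → Tendsto (fun t => f (t * x) / f t) atTop (𝓝 (x ^ ρ))


section AuxLemmas

/-- Ratio test: if `a (k+1) / a k → L > 1` and `a` is positive, then `a → ∞`. -/
lemma ratio_tendsto_atTop {a : ℕ → ℝ} {L : ℝ} (hpos : ∀ k, 0 < a k)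
    (h : Tendsto (fun k => a (k + 1) / a k) atTop (𝓝 L)) (hL : 1 < L) :
    Tendsto a atTop atTop := by
  set c : ℝ := (1 + L) / 2 with hc
  have hc1 : 1 < c := by rw [hc]; linarith
  have hcL : c < L := by rw [hc]; linarith
  obtain ⟨K, hK⟩ := eventually_atTop.1 (h.eventually_const_lt hcL)
  have key : Tendsto (fun m => a (m + K)) atTop atTop := by
    refine tendsto_atTop_of_geom_le (v := fun m => a (m + K)) (hpos _) hc1 fun m => ?_
    have h1 := hK (m + K) (Nat.le_add_left _ _)
    have h2 := hpos (m + K)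
    have h3 := (lt_div_iff₀ h2).1 h1
    calc c * a (m + K) ≤ a (m + K + 1) := h3.le
      _ = a (m + 1 + K) := by rw [show m + 1 + K = m + K + 1 from by omega]
  exact (tendsto_add_atTop_iff_nat K).1 key

/-- Ratio test: if `a (k+1) / a k → L < 1` with `0 ≤ L` and `a` positive, then `a → 0`. -/
lemma ratio_tendsto_zero {a : ℕ → ℝ} {L : ℝ} (hpos : ∀ k, 0 < a k)
    (h : Tendsto (fun k => a (k + 1) / a k) atTop (𝓝 L)) (hL0 : 0 ≤ L) (hL : L < 1) :
    Tendsto a atTop (𝓝 0) := by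
  set c : ℝ := (1 + L) / 2 with hc
  have hc1 : c < 1 := by rw [hc]; linarith
  have hc0 : 0 < c := by rw [hc]; linarith
  have hcL : L < c := by rw [hc]; linarith
  obtain ⟨K, hK⟩ := eventually_atTop.1 (h.eventually_lt_const hcL)
  have hbound : ∀ m, a (m + K) ≤ c ^ m * a K := by
    intro m
    induction m with
    | zero => simp
    | succ m ih =>
      have h1 := hK (m + K) (Nat.le_add_left _ _)
      have h2 := hpos (m + K)
      have h3 : a (m + K + 1) ≤ c * a (m + K) := by
        rw [div_lt_iff₀ h2] at h1; linarith
      calc a (m + 1 + K) = a (m + K + 1) := by rw [show m + 1 + K = m + K + 1 from by omega]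
        _ ≤ c * a (m + K) := h3
        _ ≤ c * (c ^ m * a K) := mul_le_mul_of_nonneg_left ih hc0.le
        _ = c ^ (m + 1) * a K := by ring
  have key : Tendsto (fun m => a (m + K)) atTop (𝓝 0) := by
    refine squeeze_zero (fun m => (hpos _).le) hbound ?_
    have := (tendsto_pow_atTop_nhds_zero_of_lt_one hc0.le hc1).mul_const (a K)
    simpa using this
  exact (tendsto_add_atTop_iff_nat K).1 key

/-- For `0 < s < η` and `f` positive, regularly varying of index `-1/η`:
`2^k * f (exp (s * log 2^k)) → ∞`. -/
lemma geom_scale_tendsto_atTop {f : ℝ → ℝ} {η s : ℝ} (hη : 0 < η)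
    (hfpos : ∀ t : ℝ, 0 < f t) (hRV : RegVaryingAtTop f (-1 / η))
    (hs0 : 0 < s) (hsη : s < η) :
    Tendsto (fun k : ℕ => ((2 ^ k : ℕ) : ℝ) * f (Real.exp (s * Real.log ((2 ^ k : ℕ) : ℝ))))
      atTop atTop := by
  set x : ℝ := Real.exp (s * Real.log 2) with hxdef
  have hxpos : 0 < x := Real.exp_pos _
  set t : ℕ → ℝ := fun k => Real.exp (s * Real.log ((2 ^ k : ℕ) : ℝ)) with htdef
  have ht_succ : ∀ k, t (k + 1) = t k * x := by
    intro k
    simp only [htdef, hxdef]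
    rw [← Real.exp_add]
    congr 1
    push_cast
    rw [Real.log_pow, Real.log_pow]
    push_cast
    ring
  have httop : Tendsto t atTop atTop := by
    apply Real.tendsto_exp_atTop.comp
    have h1 : Tendsto (fun k : ℕ => (k : ℝ) * Real.log 2) atTop atTop :=
      tendsto_natCast_atTop_atTop.atTop_mul_const (Real.log_pos one_lt_two)
    have h2 := h1.const_mul_atTop hs0
    refine h2.congr fun k => ?_
    push_cast
    rw [Real.log_pow]
  set a : ℕ → ℝ := fun k => ((2 ^ k : ℕ) : ℝ) * f (t k) with hadef
  have hapos : ∀ k, 0 < a k := fun k => mul_pos (by positivity) (hfpos _)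
  have hratio : Tendsto (fun k => a (k + 1) / a k) atTop (𝓝 (2 * x ^ (-1 / η))) := by
    have hcomp : Tendsto (fun k => f (t k * x) / f (t k)) atTop (𝓝 (x ^ (-1 / η))) :=
      (hRV x hxpos).comp httop
    have := hcomp.const_mul (2 : ℝ)
    refine this.congr fun k => ?_
    simp only [hadef, ht_succ k]
    have h2k : ((2 ^ k : ℕ) : ℝ) ≠ 0 := by positivity
    have hfk : f (t k) ≠ 0 := (hfpos _).ne'
    push_cast
    field_simp
    ring
  have hL : 1 < 2 * x ^ (-1 / η) := by
    have hx : x ^ (-1 / η) = Real.exp (s * Real.log 2 * (-1 / η)) := by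
      rw [hxdef, Real.rpow_def_of_pos (Real.exp_pos _), Real.log_exp]
    rw [hx]
    have h2 : (2 : ℝ) = Real.exp (Real.log 2) := (Real.exp_log two_pos).symm
    calc (1 : ℝ) = Real.exp 0 := Real.exp_zero.symm
      _ < Real.exp (Real.log 2 + s * Real.log 2 * (-1 / η)) := by
          apply Real.exp_lt_exp.2
          have hlog2 : 0 < Real.log 2 := Real.log_pos one_lt_two
          have heq : s * Real.log 2 * (-1 / η) = -(s / η) * Real.log 2 := by field_simp
          rw [heq]
          have hsη' : s / η < 1 := (div_lt_one hη).2 hsη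
          nlinarith
      _ = 2 * Real.exp (s * Real.log 2 * (-1 / η)) := by
          rw [Real.exp_add, ← h2]
  exact ratio_tendsto_atTop hapos hratio hL

/-- For `s > η` and `f` positive, regularly varying of index `-1/η`:
`2^k * f (exp (s * log 2^k)) → 0`. -/
lemma geom_scale_tendsto_zero {f : ℝ → ℝ} {η s : ℝ} (hη : 0 < η)
    (hfpos : ∀ t : ℝ, 0 < f t) (hRV : RegVaryingAtTop f (-1 / η))
    (hsη : η < s) :
    Tendsto (fun k : ℕ => ((2 ^ k : ℕ) : ℝ) * f (Real.exp (s * Real.log ((2 ^ k : ℕ) : ℝ))))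
      atTop (𝓝 0) := by
  have hs0 : 0 < s := hη.trans hsη
  set x : ℝ := Real.exp (s * Real.log 2) with hxdef
  have hxpos : 0 < x := Real.exp_pos _
  set t : ℕ → ℝ := fun k => Real.exp (s * Real.log ((2 ^ k : ℕ) : ℝ)) with htdef
  have ht_succ : ∀ k, t (k + 1) = t k * x := by
    intro k
    simp only [htdef, hxdef]
    rw [← Real.exp_add]
    congr 1
    push_cast
    rw [Real.log_pow, Real.log_pow]
    push_cast
    ring
  have httop : Tendsto t atTop atTop := by
    apply Real.tendsto_exp_atTop.comp
    have h1 : Tendsto (fun k : ℕ => (k : ℝ) * Real.log 2) atTop atTop :=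
      tendsto_natCast_atTop_atTop.atTop_mul_const (Real.log_pos one_lt_two)
    have h2 := h1.const_mul_atTop hs0
    refine h2.congr fun k => ?_
    push_cast
    rw [Real.log_pow]
  set a : ℕ → ℝ := fun k => ((2 ^ k : ℕ) : ℝ) * f (t k) with hadef
  have hapos : ∀ k, 0 < a k := fun k => mul_pos (by positivity) (hfpos _)
  have hratio : Tendsto (fun k => a (k + 1) / a k) atTop (𝓝 (2 * x ^ (-1 / η))) := by
    have hcomp : Tendsto (fun k => f (t k * x) / f (t k)) atTop (𝓝 (x ^ (-1 / η))) :=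
      (hRV x hxpos).comp httop
    have := hcomp.const_mul (2 : ℝ)
    refine this.congr fun k => ?_
    simp only [hadef, ht_succ k]
    have h2k : ((2 ^ k : ℕ) : ℝ) ≠ 0 := by positivity
    have hfk : f (t k) ≠ 0 := (hfpos _).ne'
    push_cast
    field_simp
    ring
  have hL : 2 * x ^ (-1 / η) < 1 := by
    have hx : x ^ (-1 / η) = Real.exp (s * Real.log 2 * (-1 / η)) := by
      rw [hxdef, Real.rpow_def_of_pos (Real.exp_pos _), Real.log_exp]
    rw [hx]
    have h2 : (2 : ℝ) = Real.exp (Real.log 2) := (Real.exp_log two_pos).symm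
    calc 2 * Real.exp (s * Real.log 2 * (-1 / η))
        = Real.exp (Real.log 2 + s * Real.log 2 * (-1 / η)) := by
          rw [Real.exp_add, ← h2]
      _ < Real.exp 0 := by
          apply Real.exp_lt_exp.2
          have hlog2 : 0 < Real.log 2 := Real.log_pos one_lt_two
          have heq : s * Real.log 2 * (-1 / η) = -(s / η) * Real.log 2 := by field_simp
          rw [heq]
          have hsη' : 1 < s / η := (one_lt_div hη).2 hsη
          nlinarith
      _ = 1 := Real.exp_zero
  have hL0 : 0 ≤ 2 * x ^ (-1 / η) := by positivity
  exact ratio_tendsto_zero hapos hratio hL0 hL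

end AuxLemmas

/-- Corollary of Proposition 7, after Nolde (2014): under the hypotheses of
the proposition linking `λ` to the limit set, with `η_D` the residual tail dependence
coefficient, `1/η_D = d·λ(1/d,…,1/d) = [min{r ∈ [0,1] : (r,∞)^d ∩ G = ∅}]⁻¹`. -/
theorem residual_tail_dependence_via_limit_set
    {Ω : Type*} [MeasurableSpace Ω] (μ : Measure Ω) [IsProbabilityMeasure μ]
    {d : ℕ} (hd : 0 < d)
    (X : ℕ → Ω → (Fin d → ℝ)) (hXmeas : ∀ i, Measurable (X i))
    -- i.i.d. copies with standard exponential margins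
    (hindep : iIndepFun X μ)
    (hident : ∀ i, Measure.map (X i) μ = Measure.map (X 0) μ)
    (hmarg : ∀ j, ∀ x : ℝ, 0 ≤ x → (μ {ω | x < X 0 ω j}).toReal = Real.exp (-x))
    -- the limit set G
    (G : Set (Fin d → ℝ)) (hGcomp : IsCompact G)
    (hGsub : G ⊆ {x | ∀ j, x j ∈ Set.Icc (0:ℝ) 1})
    (hGsup : ∀ j, IsLUB ((fun x : Fin d → ℝ => x j) '' G) 1)
    (hconv : ConvInProbOnto μ (sampleCloud X fun n => Real.log n) G)
    -- the angular dependence function λ(ω)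
    (lam : (Fin d → ℝ) → ℝ)
    (hlam : ∀ ω : Fin d → ℝ, (∀ j, 0 ≤ ω j) → ∑ j, ω j = 1 →
      ∃ ℓ : ℝ → ℝ, SlowlyVaryingAtTop ℓ ∧ ∀ v : ℝ, 0 < v →
        (μ {a | ∀ j, ω j * v < X 0 a j}).toReal = ℓ (Real.exp v) * Real.exp (-(lam ω * v)))
    -- the residual tail dependence coefficient η_D (in Pareto margins X_P = exp X_E)
    (η : ℝ) (hη : 0 < η) (hη1 : η ≤ 1)
    (hηRV : RegVaryingAtTop
      (fun t => (μ {a | ∀ j, t < Real.exp (X 0 a j)}).toReal) (-1 / η)) :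
    1 / η = d * lam (fun _ => 1 / d) ∧
    1 / η = (sInf {r : ℝ | r ∈ Set.Icc (0:ℝ) 1 ∧
      {x : Fin d → ℝ | ∀ j, r < x j} ∩ G = ∅})⁻¹ := by
  classical
  have hdR : (0:ℝ) < d := by exact_mod_cast hd
  set f : ℝ → ℝ := fun t => (μ {a | ∀ j, t < Real.exp (X 0 a j)}).toReal with hfdef
  -- measurability of the corner sets
  have hB : ∀ c : ℝ, MeasurableSet {x : Fin d → ℝ | ∀ j, c < x j} := by
    intro c
    have hBe : {x : Fin d → ℝ | ∀ j, c < x j}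
        = ⋂ j, (fun x : Fin d → ℝ => x j) ⁻¹' Set.Ioi c := by
      ext x; simp [Set.mem_iInter]
    rw [hBe]
    exact MeasurableSet.iInter fun j => (measurable_pi_apply j) measurableSet_Ioi
  -- identical distribution of the corner events
  have hid : ∀ (i : ℕ) (c : ℝ), μ (X i ⁻¹' {x | ∀ j, c < x j})
      = μ (X 0 ⁻¹' {x | ∀ j, c < x j}) := by
    intro i c
    rw [← Measure.map_apply (hXmeas i) (hB c), hident i, Measure.map_apply (hXmeas 0) (hB c)]
  -- f in terms of corner probabilities
  have hf_eq : ∀ c : ℝ, f (Real.exp c) = (μ (X 0 ⁻¹' {x | ∀ j, c < x j})).toReal := by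
    intro c
    have hse : {a | ∀ j, Real.exp c < Real.exp (X 0 a j)} = X 0 ⁻¹' {x | ∀ j, c < x j} := by
      ext a
      simp only [Set.mem_setOf_eq, Set.mem_preimage]
      exact forall_congr' fun j => Real.exp_lt_exp
    simp only [hfdef, hse]
  -- f is antitone
  have hf_anti : Antitone f := by
    intro t1 t2 h12
    apply ENNReal.toReal_mono (measure_ne_top μ _)
    exact measure_mono fun a ha j => lt_of_le_of_lt h12 (ha j)
  -- f is positive
  have hf_pos : ∀ t : ℝ, 0 < f t := by
    by_contra hcon
    push_neg at hcon
    obtain ⟨t0, ht0⟩ := hcon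
    have ht0' : f t0 = 0 := le_antisymm ht0 ENNReal.toReal_nonneg
    have hzero : ∀ t, t0 ≤ t → f t = 0 := fun t ht =>
      le_antisymm (ht0' ▸ hf_anti ht) ENNReal.toReal_nonneg
    have h2 := hηRV 2 two_pos
    have h0 : Tendsto (fun t : ℝ => f (t * 2) / f t) atTop (𝓝 0) := by
      apply Tendsto.congr' _ (tendsto_const_nhds (x := (0:ℝ)))
      filter_upwards [eventually_ge_atTop (max t0 0)] with t ht
      have h1 : t0 ≤ t * 2 := by
        have h1a : t0 ≤ t := le_trans (le_max_left _ _) ht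
        have h1b : 0 ≤ t := le_trans (le_max_right _ _) ht
        nlinarith
      rw [hzero (t * 2) h1, zero_div]
    have := tendsto_nhds_unique h2 h0
    exact absurd this (Real.rpow_pos_of_pos two_pos _).ne'
  -- G is nonempty
  have hGne : G.Nonempty := by
    by_contra hGe
    rw [Set.not_nonempty_iff_eq_empty] at hGe
    have hlub := hGsup ⟨0, hd⟩
    rw [hGe, Set.image_empty] at hlub
    have h0ub : (0:ℝ) ∈ upperBounds (∅ : Set ℝ) := fun y hy => absurd hy (Set.notMem_empty y)
    have := hlub.2 h0ub
    linarith
  -- the sample clouds are finite and nonempty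
  have hcloud_fin : ∀ (n : ℕ) (ω : Ω), (sampleCloud X (fun n => Real.log n) n ω).Finite := by
    intro n ω
    have hsub : sampleCloud X (fun n => Real.log n) n ω
        ⊆ (fun i => (Real.log (n:ℝ))⁻¹ • X i ω) '' Set.Icc 1 n := by
      rintro y ⟨i, h1, h2, rfl⟩
      exact ⟨i, ⟨h1, h2⟩, rfl⟩
    exact ((Set.finite_Icc 1 n).image _).subset hsub
  have hcloud_ne : ∀ (n : ℕ) (ω : Ω), 1 ≤ n →
      (sampleCloud X (fun n => Real.log n) n ω).Nonempty := by
    intro n ω hn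
    exact ⟨(Real.log (n:ℝ))⁻¹ • X 1 ω, 1, le_refl 1, hn, rfl⟩
  -- the product identity for the complement events
  have hprod : ∀ (c : ℝ) (n : ℕ),
      μ (⋂ i ∈ Finset.Icc 1 n, X i ⁻¹' ({x | ∀ j, c < x j}ᶜ))
      = (1 - μ (X 0 ⁻¹' {x | ∀ j, c < x j})) ^ n := by
    intro c n
    rw [hindep.meas_biInter (fun i _ => ⟨{x | ∀ j, c < x j}ᶜ, (hB c).compl, rfl⟩)]
    have hterm : ∀ i ∈ Finset.Icc 1 n, μ (X i ⁻¹' ({x | ∀ j, c < x j}ᶜ))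
        = 1 - μ (X 0 ⁻¹' {x | ∀ j, c < x j}) := by
      intro i _
      rw [Set.preimage_compl, measure_compl (hXmeas i (hB c)) (measure_ne_top μ _),
        measure_univ, hid i c]
    rw [Finset.prod_congr rfl hterm, Finset.prod_const, Nat.card_Icc]
    simp
  -- the union bound for the corner events
  have hunion : ∀ (c : ℝ) (n : ℕ),
      μ (⋃ i ∈ Finset.Icc 1 n, X i ⁻¹' {x | ∀ j, c < x j})
      ≤ (n : ENNReal) * μ (X 0 ⁻¹' {x | ∀ j, c < x j}) := by
    intro c n
    calc μ (⋃ i ∈ Finset.Icc 1 n, X i ⁻¹' {x | ∀ j, c < x j})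
        ≤ ∑ i ∈ Finset.Icc 1 n, μ (X i ⁻¹' {x | ∀ j, c < x j}) :=
          measure_biUnion_finset_le _ _
      _ = (n : ENNReal) * μ (X 0 ⁻¹' {x | ∀ j, c < x j}) := by
          rw [Finset.sum_congr rfl fun i _ => hid i c, Finset.sum_const, Nat.card_Icc]
          simp [mul_comm]
  -- basic facts about n = 2^k
  have hlog_pos : ∀ k : ℕ, 1 ≤ k → 0 < Real.log ((2^k : ℕ) : ℝ) := by
    intro k hk
    apply Real.log_pos
    have : (1:ℝ) < 2 ^ k := one_lt_pow₀ one_lt_two (by omega)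
    push_cast
    exact this
  -- ============ KEY FACT 1: for r < η the corner (r,∞)^d meets G ============
  have key1 : ∀ r : ℝ, 0 ≤ r → r < η → ({x : Fin d → ℝ | ∀ j, r < x j} ∩ G).Nonempty := by
    intro r hr0 hrη
    rw [Set.nonempty_iff_ne_empty]
    intro hre
    set r' : ℝ := (r + η) / 2 with hr'def
    have hr'0 : 0 < r' := by rw [hr'def]; linarith
    have hrr' : r < r' := by rw [hr'def]; linarith
    have hr'η : r' < η := by rw [hr'def]; linarith
    set ε : ℝ := (r' - r) / 2 with hεdef
    have hε : 0 < ε := by rw [hεdef]; linarith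
    have hcv := hconv ε hε
    have hsub : Tendsto (fun k : ℕ => μ {ω | ε <
        Metric.hausdorffDist (sampleCloud X (fun n => Real.log n) (2^k) ω) G}) atTop (𝓝 0) :=
      hcv.comp (tendsto_pow_atTop_atTop_of_one_lt one_lt_two)
    have hsubR : Tendsto (fun k : ℕ => (μ {ω | ε <
        Metric.hausdorffDist (sampleCloud X (fun n => Real.log n) (2^k) ω) G}).toReal)
        atTop (𝓝 0) := by
      simpa [Function.comp_def] using (ENNReal.tendsto_toReal (by simp)).comp hsub
    have hA := geom_scale_tendsto_atTop hη hf_pos hηRV hr'0 hr'η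
    have hExp : Tendsto (fun k : ℕ =>
        Real.exp (-(((2^k : ℕ) : ℝ) * f (Real.exp (r' * Real.log ((2^k : ℕ) : ℝ))))))
        atTop (𝓝 0) :=
      Real.tendsto_exp_atBot.comp (tendsto_neg_atTop_atBot.comp hA)
    have hhalf : (0:ℝ) < 1/2 := by norm_num
    obtain ⟨k, hk1, hk2, hk3⟩ :=
      ((hsubR.eventually_lt_const hhalf).and
        ((hExp.eventually_lt_const hhalf).and (eventually_ge_atTop 1))).exists
    set n : ℕ := 2^k with hndef
    set c : ℝ := r' * Real.log ((n:ℕ) : ℝ) with hcdef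
    have hlogn : 0 < Real.log ((n:ℕ) : ℝ) := hlog_pos k hk3
    -- event inclusion
    have hincl : (⋃ i ∈ Finset.Icc 1 n, X i ⁻¹' {x | ∀ j, c < x j})
        ⊆ {ω | ε < Metric.hausdorffDist (sampleCloud X (fun n => Real.log n) n ω) G} := by
      intro ω hω
      simp only [Set.mem_iUnion, Set.mem_preimage, Set.mem_setOf_eq] at hω
      obtain ⟨i, hi, hXi⟩ := hω
      rw [Finset.mem_Icc] at hi
      set y : Fin d → ℝ := (Real.log ((n:ℕ) : ℝ))⁻¹ • X i ω with hydef
      have hy : y ∈ sampleCloud X (fun n => Real.log n) n ω := ⟨i, hi.1, hi.2, rfl⟩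
      have hyj : ∀ j, r' < y j := by
        intro j
        have hXij := hXi j
        have h1 : r' = (Real.log ((n:ℕ) : ℝ))⁻¹ * (r' * Real.log ((n:ℕ) : ℝ)) := by
          field_simp
        have h2 : (Real.log ((n:ℕ) : ℝ))⁻¹ * (r' * Real.log ((n:ℕ) : ℝ))
            < (Real.log ((n:ℕ) : ℝ))⁻¹ * X i ω j :=
          mul_lt_mul_of_pos_left hXij (inv_pos.2 hlogn)
        have h3 : y j = (Real.log ((n:ℕ) : ℝ))⁻¹ * X i ω j := rfl
        rw [h3]; linarith [h1 ▸ h2]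
      have hinf : r' - r ≤ Metric.infDist y G := by
        by_contra hlt
        push_neg at hlt
        obtain ⟨g, hgG, hdg⟩ := (Metric.infDist_lt_iff hGne).1 hlt
        obtain ⟨j, hj⟩ : ∃ j, g j ≤ r := by
          by_contra hall
          push_neg at hall
          have hmem : g ∈ {x : Fin d → ℝ | ∀ j, r < x j} ∩ G := ⟨fun j => hall j, hgG⟩
          rw [hre] at hmem
          exact hmem
        have h1 : r' - r < y j - g j := by have := hyj j; linarith
        have h2 : y j - g j ≤ |y j - g j| := le_abs_self _
        have h3 : |y j - g j| = dist (y j) (g j) := (Real.dist_eq _ _).symm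
        have h4 : dist (y j) (g j) ≤ dist y g := dist_le_pi_dist y g j
        linarith
      have hfin : EMetric.hausdorffEdist (sampleCloud X (fun n => Real.log n) n ω) G ≠ ⊤ :=
        Metric.hausdorffEdist_ne_top_of_nonempty_of_bounded ⟨y, hy⟩ hGne
          ((hcloud_fin n ω).isBounded) hGcomp.isBounded
      have h5 := Metric.infDist_le_hausdorffDist_of_mem hy hfin
      have h6 : ε < r' - r := by rw [hεdef]; linarith
      show ε < Metric.hausdorffDist (sampleCloud X (fun n => Real.log n) n ω) G
      linarith
    -- cover and measure arithmetic
    have hcover : (Set.univ : Set Ω)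
        ⊆ {ω | ε < Metric.hausdorffDist (sampleCloud X (fun n => Real.log n) n ω) G}
          ∪ (⋂ i ∈ Finset.Icc 1 n, X i ⁻¹' ({x | ∀ j, c < x j}ᶜ)) := by
      intro ω _
      by_cases hω : ω ∈ ⋃ i ∈ Finset.Icc 1 n, X i ⁻¹' {x | ∀ j, c < x j}
      · exact Or.inl (hincl hω)
      · right
        simp only [Set.mem_iUnion, exists_prop, not_exists, not_and] at hω
        simp only [Set.mem_iInter, Set.mem_preimage, Set.mem_compl_iff]
        intro i hi hmem
        exact hω i hi hmem
    have hμ1 : (1:ENNReal)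
        ≤ μ {ω | ε < Metric.hausdorffDist (sampleCloud X (fun n => Real.log n) n ω) G}
          + (1 - μ (X 0 ⁻¹' {x | ∀ j, c < x j})) ^ n := by
      calc (1:ENNReal) = μ Set.univ := (measure_univ).symm
        _ ≤ μ ({ω | ε < Metric.hausdorffDist (sampleCloud X (fun n => Real.log n) n ω) G}
            ∪ (⋂ i ∈ Finset.Icc 1 n, X i ⁻¹' ({x | ∀ j, c < x j}ᶜ))) := measure_mono hcover
        _ ≤ _ := (measure_union_le _ _).trans (by rw [hprod c n])
    set p : ℝ := (μ (X 0 ⁻¹' {x | ∀ j, c < x j})).toReal with hpdef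
    have hp0 : 0 ≤ p := ENNReal.toReal_nonneg
    have hp1 : p ≤ 1 := by
      rw [hpdef]
      exact ENNReal.toReal_le_of_le_ofReal one_pos.le (by simpa using prob_le_one)
    have htoR : (1:ℝ) ≤ (μ {ω | ε <
        Metric.hausdorffDist (sampleCloud X (fun n => Real.log n) n ω) G}).toReal
        + (1 - p) ^ n := by
      have hfin1 : μ {ω | ε < Metric.hausdorffDist (sampleCloud X (fun n => Real.log n) n ω) G}
          ≠ ⊤ := measure_ne_top μ _
      have hfin2 : (1 - μ (X 0 ⁻¹' {x | ∀ j, c < x j})) ^ n ≠ (⊤ : ENNReal) := by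
        apply ENNReal.pow_ne_top
        exact (tsub_le_self.trans_lt (lt_top_iff_ne_top.2 ENNReal.one_ne_top)).ne
      have := ENNReal.toReal_mono (by finiteness) hμ1
      rw [ENNReal.toReal_one, ENNReal.toReal_add hfin1 hfin2, ENNReal.toReal_pow,
        ENNReal.toReal_sub_of_le prob_le_one ENNReal.one_ne_top, ENNReal.toReal_one] at this
      exact this
    -- bound (1-p)^n by exp(-(n p)) and conclude
    have hpf : p = f (Real.exp c) := (hf_eq c).symm
    have hbound : (1 - p) ^ n ≤ Real.exp (-(((n:ℕ) : ℝ) * p)) := by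
      have h1 : 1 - p ≤ Real.exp (-p) := by linarith [Real.add_one_le_exp (-p)]
      calc (1 - p) ^ n ≤ (Real.exp (-p)) ^ n := pow_le_pow_left₀ (by linarith) h1 n
        _ = Real.exp (((n:ℕ) : ℝ) * (-p)) := (Real.exp_nat_mul _ n).symm
        _ = Real.exp (-(((n:ℕ) : ℝ) * p)) := by ring_nf
    have hk2' : Real.exp (-(((n:ℕ) : ℝ) * p)) < 1/2 := by
      have : ((n:ℕ) : ℝ) * p = ((2^k : ℕ) : ℝ) * f (Real.exp (r' * Real.log ((2^k : ℕ) : ℝ))) := by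
        rw [hpf, hcdef, hndef]
      rw [this]
      exact hk2
    linarith
  -- ============ KEY FACT 2: G contains no point with all coordinates > η ============
  have key2 : ∀ g ∈ G, ¬ (∀ j, η < g j) := by
    intro g hgG hgη
    have hne : Nonempty (Fin d) := ⟨⟨0, hd⟩⟩
    set m : ℝ := Finset.univ.inf' Finset.univ_nonempty g with hmdef
    have hm_le : ∀ j, m ≤ g j := fun j => Finset.inf'_le g (Finset.mem_univ j)
    have hηm : η < m := by
      rw [hmdef, Finset.lt_inf'_iff]
      exact fun j _ => hgη j
    set r'' : ℝ := (η + m) / 2 with hr''def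
    have hr''1 : η < r'' := by rw [hr''def]; linarith
    have hr''2 : r'' < m := by rw [hr''def]; linarith
    set ε : ℝ := m - r'' with hεdef
    have hε : 0 < ε := by rw [hεdef]; linarith
    have hcv := hconv (ε/2) (by linarith)
    have hsub : Tendsto (fun k : ℕ => μ {ω | ε/2 <
        Metric.hausdorffDist (sampleCloud X (fun n => Real.log n) (2^k) ω) G}) atTop (𝓝 0) :=
      hcv.comp (tendsto_pow_atTop_atTop_of_one_lt one_lt_two)
    have hsubR : Tendsto (fun k : ℕ => (μ {ω | ε/2 <
        Metric.hausdorffDist (sampleCloud X (fun n => Real.log n) (2^k) ω) G}).toReal)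
        atTop (𝓝 0) := by
      simpa [Function.comp_def] using (ENNReal.tendsto_toReal (by simp)).comp hsub
    have hA0 := geom_scale_tendsto_zero hη hf_pos hηRV hr''1
    have hq : (0:ℝ) < 1/4 := by norm_num
    obtain ⟨k, hk1, hk2, hk3⟩ :=
      ((hsubR.eventually_lt_const hq).and
        ((hA0.eventually_lt_const hq).and (eventually_ge_atTop 1))).exists
    set n : ℕ := 2^k with hndef
    set c : ℝ := r'' * Real.log ((n:ℕ) : ℝ) with hcdef
    have hlogn : 0 < Real.log ((n:ℕ) : ℝ) := hlog_pos k hk3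
    have hn1 : 1 ≤ n := Nat.one_le_two_pow
    -- inclusion of the complement event
    have hincl : {ω | ε/2 <
        Metric.hausdorffDist (sampleCloud X (fun n => Real.log n) n ω) G}ᶜ
        ⊆ ⋃ i ∈ Finset.Icc 1 n, X i ⁻¹' {x | ∀ j, c < x j} := by
      intro ω hω
      simp only [Set.mem_compl_iff, Set.mem_setOf_eq, not_lt] at hω
      have hNe := hcloud_ne n ω hn1
      have hfin : EMetric.hausdorffEdist (sampleCloud X (fun n => Real.log n) n ω) G ≠ ⊤ :=
        Metric.hausdorffEdist_ne_top_of_nonempty_of_bounded hNe hGne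
          ((hcloud_fin n ω).isBounded) hGcomp.isBounded
      have hdlt : Metric.hausdorffDist (sampleCloud X (fun n => Real.log n) n ω) G < ε := by
        linarith
      obtain ⟨y, hyN, hyg⟩ := Metric.exists_dist_lt_of_hausdorffDist_lt' hgG hdlt hfin
      obtain ⟨i, hi1, hi2, hyeq⟩ := hyN
      refine Set.mem_biUnion (Finset.mem_Icc.2 ⟨hi1, hi2⟩) ?_
      show X i ω ∈ {x | ∀ j, c < x j}
      intro j
      have h1 : dist (y j) (g j) ≤ dist y g := dist_le_pi_dist y g j
      have h2 : g j - y j ≤ |y j - g j| := by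
        rw [abs_sub_comm]; exact le_abs_self _
      have h3 : |y j - g j| = dist (y j) (g j) := (Real.dist_eq _ _).symm
      have h4 : r'' < y j := by
        have hmj := hm_le j
        have hεm : ε = m - r'' := hεdef
        linarith
      have h5 : y j = (Real.log ((n:ℕ) : ℝ))⁻¹ * X i ω j := by rw [hyeq]; rfl
      have h6 : X i ω j = Real.log ((n:ℕ) : ℝ) * y j := by
        rw [h5]; field_simp
      rw [hcdef, h6]
      calc r'' * Real.log ((n:ℕ) : ℝ) < y j * Real.log ((n:ℕ) : ℝ) :=
          mul_lt_mul_of_pos_right h4 hlogn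
        _ = Real.log ((n:ℕ) : ℝ) * y j := by ring
    -- measure arithmetic
    have hμ1 : (1:ENNReal)
        ≤ μ {ω | ε/2 < Metric.hausdorffDist (sampleCloud X (fun n => Real.log n) n ω) G}
          + (n : ENNReal) * μ (X 0 ⁻¹' {x | ∀ j, c < x j}) := by
      have hcover : (Set.univ : Set Ω)
          ⊆ {ω | ε/2 < Metric.hausdorffDist (sampleCloud X (fun n => Real.log n) n ω) G}
            ∪ (⋃ i ∈ Finset.Icc 1 n, X i ⁻¹' {x | ∀ j, c < x j}) := by
        intro ω _
        by_cases hω : ω ∈ {ω | ε/2 <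
            Metric.hausdorffDist (sampleCloud X (fun n => Real.log n) n ω) G}
        · exact Or.inl hω
        · exact Or.inr (hincl hω)
      calc (1:ENNReal) = μ Set.univ := (measure_univ).symm
        _ ≤ μ ({ω | ε/2 < Metric.hausdorffDist (sampleCloud X (fun n => Real.log n) n ω) G}
            ∪ (⋃ i ∈ Finset.Icc 1 n, X i ⁻¹' {x | ∀ j, c < x j})) := measure_mono hcover
        _ ≤ _ := (measure_union_le _ _).trans (add_le_add_right (hunion c n) _)
    set p : ℝ := (μ (X 0 ⁻¹' {x | ∀ j, c < x j})).toReal with hpdef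
    have htoR : (1:ℝ) ≤ (μ {ω | ε/2 <
        Metric.hausdorffDist (sampleCloud X (fun n => Real.log n) n ω) G}).toReal
        + ((n:ℕ) : ℝ) * p := by
      have := ENNReal.toReal_mono (by finiteness) hμ1
      rw [ENNReal.toReal_one, ENNReal.toReal_add (measure_ne_top μ _)
        (by finiteness), ENNReal.toReal_mul, ENNReal.toReal_natCast] at this
      exact this
    have hpf : p = f (Real.exp c) := (hf_eq c).symm
    have hnp : ((n:ℕ) : ℝ) * p
        = ((2^k : ℕ) : ℝ) * f (Real.exp (r'' * Real.log ((2^k : ℕ) : ℝ))) := by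
      rw [hpf, hcdef, hndef]
    rw [hnp] at htoR
    linarith
  -- ============ Part 1: 1/η = d·λ(1/d,…,1/d) ============
  obtain ⟨ℓ, hℓsv, hℓ⟩ := hlam (fun _ => 1 / (d:ℝ)) (fun j => by positivity) (by
    rw [Finset.sum_const, Finset.card_univ, Fintype.card_fin, nsmul_eq_mul]
    field_simp)
  set e : ℝ := (d : ℝ) * lam (fun _ => 1 / (d:ℝ)) with hedef
  have hf_form : ∀ t : ℝ, 1 < t → f t = ℓ (t ^ (d:ℝ)) * t ^ (-e) := by
    intro t ht
    have ht0 : 0 < t := lt_trans one_pos ht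
    have hv : 0 < (d:ℝ) * Real.log t := mul_pos hdR (Real.log_pos ht)
    have hform := hℓ ((d:ℝ) * Real.log t) hv
    have hset : {a | ∀ j, (fun _ : Fin d => 1/(d:ℝ)) j * ((d:ℝ) * Real.log t) < X 0 a j}
        = {a | ∀ j, t < Real.exp (X 0 a j)} := by
      ext a
      simp only [Set.mem_setOf_eq]
      refine forall_congr' fun j => ?_
      rw [show (1/(d:ℝ)) * ((d:ℝ) * Real.log t) = Real.log t by field_simp]
      exact Real.log_lt_iff_lt_exp ht0
    rw [hset] at hform
    have hlhs : f t = (μ {a | ∀ j, t < Real.exp (X 0 a j)}).toReal := rfl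
    rw [hlhs, hform]
    congr 1
    · congr 1
      rw [Real.rpow_def_of_pos ht0]
      ring_nf
    · rw [Real.rpow_def_of_pos ht0, hedef]
      congr 1
      ring
  have hlim2 : ∀ x : ℝ, 0 < x → Tendsto (fun t => f (t * x) / f t) atTop (𝓝 (x ^ (-e))) := by
    intro x hx
    have hsl : Tendsto (fun t : ℝ => ℓ (t ^ (d:ℝ) * x ^ (d:ℝ)) / ℓ (t ^ (d:ℝ))) atTop (𝓝 1) :=
      (hℓsv (x ^ (d:ℝ)) (Real.rpow_pos_of_pos hx _)).comp (tendsto_rpow_atTop hdR)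
    have hmul := hsl.mul_const (x ^ (-e))
    rw [one_mul] at hmul
    apply hmul.congr'
    filter_upwards [eventually_gt_atTop (max 1 (1/x))] with t ht
    have ht1 : 1 < t := lt_of_le_of_lt (le_max_left _ _) ht
    have ht0 : 0 < t := lt_trans one_pos ht1
    have htx : 1 < t * x := by
      have h1 : 1/x < t := lt_of_le_of_lt (le_max_right _ _) ht
      calc (1:ℝ) = (1/x) * x := by field_simp
        _ < t * x := mul_lt_mul_of_pos_right h1 hx
    have hll : ℓ (t ^ (d:ℝ)) ≠ 0 := by
      intro h0
      have := hf_form t ht1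
      rw [h0, zero_mul] at this
      exact (hf_pos t).ne' this
    have hmr1 : (t * x) ^ ((d:ℝ)) = t ^ (d:ℝ) * x ^ (d:ℝ) := Real.mul_rpow ht0.le hx.le
    have hmr2 : (t * x) ^ (-e) = t ^ (-e) * x ^ (-e) := Real.mul_rpow ht0.le hx.le
    have hte : t ^ (-e) ≠ 0 := (Real.rpow_pos_of_pos ht0 _).ne'
    have hT : t ^ (-e) ≠ 0 := (Real.rpow_pos_of_pos ht0 _).ne'
    rw [hf_form (t * x) htx, hf_form t ht1, hmr1, hmr2, div_mul_eq_mul_div,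
      div_eq_div_iff hll (mul_ne_zero hll hT)]
    ring
  have huniq := tendsto_nhds_unique (hηRV (Real.exp 1) (Real.exp_pos 1))
    (hlim2 (Real.exp 1) (Real.exp_pos 1))
  rw [Real.exp_one_rpow, Real.exp_one_rpow] at huniq
  have h1e : 1/η = e := by
    have := Real.exp_eq_exp.1 huniq
    have h' : -(1/η) = -e := by rw [← this]; ring
    linarith
  -- ============ assemble ============
  set S : Set ℝ := {r : ℝ | r ∈ Set.Icc (0:ℝ) 1 ∧
      {x : Fin d → ℝ | ∀ j, r < x j} ∩ G = ∅} with hSdef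
  have hηS : η ∈ S := by
    refine ⟨⟨hη.le, hη1⟩, ?_⟩
    rw [Set.eq_empty_iff_forall_notMem]
    rintro x ⟨hx1, hx2⟩
    exact key2 x hx2 hx1
  have hlow : ∀ r ∈ S, η ≤ r := by
    intro r hr
    by_contra hlt
    push_neg at hlt
    exact absurd hr.2 (Set.nonempty_iff_ne_empty.1 (key1 r hr.1.1 hlt))
  have hSinf : sInf S = η :=
    le_antisymm (csInf_le ⟨0, fun r hr => hr.1.1⟩ hηS) (le_csInf ⟨η, hηS⟩ hlow)
  constructor
  · rw [h1e, hedef]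
  · rw [hSinf, one_div]
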